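/- The difference between transitivity and strong transitivity can be arbitrarily large: for every natural number N there exists a finite simple graph G with Tr(G) − Tr_st(G) ≥ N. -/

import Mathlib

namespace StrongTrans

variable {V : Type*}

/-- The degree of a vertex (number of neighbours). -/
noncomputable def deg (G : SimpleGraph V) (v : V) : ℕ := Nat.card {w // G.Adj v w}

/-- `A` dominates `B`: every vertex of `B` has a neighbour in `A`. -/
def Dominates (G : SimpleGraph V) (A B : Set V) : Prop :=
  ∀ y ∈ B, ∃ x ∈ A, G.Adj x y

/-- `A` strongly dominates `B`: every vertex `y ∈ B` has a neighbour `x ∈ A`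
with `deg x ≥ deg y`. -/
def StronglyDominates (G : SimpleGraph V) (A B : Set V) : Prop :=
  ∀ y ∈ B, ∃ x ∈ A, G.Adj x y ∧ deg G y ≤ deg G x

/-- A transitive partition of `G` into `k` nonempty parts `P 0, …, P (k-1)`:
the parts are pairwise disjoint, cover `V`, and earlier parts dominate later ones. -/
structure IsTransitivePartition (G : SimpleGraph V) {k : ℕ} (P : Fin k → Set V) : Prop where
  nonempty : ∀ i, (P i).Nonempty
  pairwiseDisjoint : ∀ i j, i ≠ j → Disjoint (P i) (P j)
  covers : ∀ v, ∃ i, v ∈ P i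
  dominates : ∀ i j, i < j → Dominates G (P i) (P j)

/-- A strong transitive partition of `G` into `k` nonempty parts:
earlier parts strongly dominate later ones. -/
structure IsStrongTransitivePartition (G : SimpleGraph V) {k : ℕ} (P : Fin k → Set V) : Prop where
  nonempty : ∀ i, (P i).Nonempty
  pairwiseDisjoint : ∀ i j, i ≠ j → Disjoint (P i) (P j)
  covers : ∀ v, ∃ i, v ∈ P i
  stronglyDominates : ∀ i j, i < j → StronglyDominates G (P i) (P j)

/-- The transitivity `Tr(G)`: maximum size of a transitive partition. -/
noncomputable def transitivity (G : SimpleGraph V) : ℕ :=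
  sSup {k | ∃ P : Fin k → Set V, IsTransitivePartition G P}

/-- The strong transitivity `Tr_st(G)`: maximum size of a strong transitive partition. -/
noncomputable def strongTransitivity (G : SimpleGraph V) : ℕ :=
  sSup {k | ∃ P : Fin k → Set V, IsStrongTransitivePartition G P}


/-- The complete bipartite graph `K_{N+2,N+1}` on `Fin (2N+3)`. -/
def gapGraph (N : ℕ) : SimpleGraph (Fin (2*N+3)) where
  Adj x y := ¬((x.val < N+2) ↔ (y.val < N+2))
  symm := ⟨by intro x y h h'; exact h h'.symm⟩
  loopless := ⟨by intro x h; exact h Iff.rfl⟩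

lemma gapGraph_adj (N : ℕ) (x y : Fin (2*N+3)) :
    (gapGraph N).Adj x y ↔ ¬((x.val < N+2) ↔ (y.val < N+2)) := Iff.rfl

lemma deg_A (N : ℕ) (x : Fin (2*N+3)) (hx : x.val < N+2) : deg (gapGraph N) x = N+1 := by
  have e1 : {w // (gapGraph N).Adj x w} ≃ Fin (N+1) :=
    { toFun := fun w => ⟨w.1.val - (N+2), by
        have hw := w.2; rw [gapGraph_adj] at hw
        have : ¬ w.1.val < N+2 := fun h => hw ⟨fun _ => h, fun _ => hx⟩
        omega⟩
      invFun := fun i => ⟨⟨N+2+i.val, by omega⟩, by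
        rw [gapGraph_adj]; intro h; have := h.mp hx; simp at this⟩
      left_inv := by
        intro w
        have hw := w.2; rw [gapGraph_adj] at hw
        have h2 : ¬ w.1.val < N+2 := fun h => hw ⟨fun _ => h, fun _ => hx⟩
        apply Subtype.ext; apply Fin.ext; simp; omega
      right_inv := by intro i; apply Fin.ext; simp }
  rw [deg, Nat.card_congr e1, Nat.card_eq_fintype_card, Fintype.card_fin]

lemma deg_B (N : ℕ) (x : Fin (2*N+3)) (hx : ¬ x.val < N+2) : deg (gapGraph N) x = N+2 := by
  have e1 : {w // (gapGraph N).Adj x w} ≃ Fin (N+2) :=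
    { toFun := fun w => ⟨w.1.val, by
        have hw := w.2; rw [gapGraph_adj] at hw
        by_contra h; exact hw ⟨fun h' => absurd h' hx, fun h' => absurd h' h⟩⟩
      invFun := fun i => ⟨⟨i.val, by omega⟩, by
        rw [gapGraph_adj]; intro h; exact hx (h.mpr i.2)⟩
      left_inv := by intro w; apply Subtype.ext; apply Fin.ext; simp
      right_inv := by intro i; apply Fin.ext; simp }
  rw [deg, Nat.card_congr e1, Nat.card_eq_fintype_card, Fintype.card_fin]

/-- Any transitive partition of a graph on `Fin n` has at most `n` parts. -/
lemma size_le_card {n k : ℕ} {G : SimpleGraph (Fin n)} {P : Fin k → Set (Fin n)}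
    (h : IsTransitivePartition G P) : k ≤ n := by
  choose f hf using h.nonempty
  have hinj : Function.Injective f := by
    intro i j hij
    by_contra hne
    exact Set.disjoint_left.mp (h.pairwiseDisjoint i j hne) (hf i) (hij ▸ hf j)
  simpa using Fintype.card_le_of_injective f hinj

/-- the gap `Tr(G) - Tr_st(G)` can be arbitrarily large: for every `N`
there is a finite simple graph `G` with `Tr(G) - Tr_st(G) ≥ N`. -/
theorem transitivity_sub_strongTransitivity_unbounded (N : ℕ) :
    ∃ (n : ℕ) (G : SimpleGraph (Fin n)),
      strongTransitivity G + N ≤ transitivity G := by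
  refine ⟨2*N+3, gapGraph N, ?_⟩
  -- Upper bound for strong transitivity: 2
  have hstrong : strongTransitivity (gapGraph N) ≤ 2 := by
    apply csSup_le'
    rintro k ⟨P, hP⟩
    by_contra hk
    push_neg at hk
    have h3 : 3 ≤ k := hk
    -- every vertex of the big-degree side B lies in part 0
    have hB0 : ∀ (v : Fin (2*N+3)) (j : Fin k), ¬ v.val < N+2 → v ∈ P j → j.val = 0 := by
      intro v j hv hvj
      by_contra hj
      have h0j : (⟨0, by omega⟩ : Fin k) < j := by
        simp only [Fin.lt_def, Fin.val_mk]; omega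
      obtain ⟨x, _, hadj, hdeg⟩ := hP.stronglyDominates _ _ h0j v hvj
      have hxA : x.val < N+2 := by
        rw [gapGraph_adj] at hadj
        by_contra h
        exact hadj ⟨fun h' => absurd h' h, fun h' => absurd h' hv⟩
      rw [deg_A N x hxA, deg_B N v hv] at hdeg
      omega
    obtain ⟨y, hy⟩ := hP.nonempty ⟨2, by omega⟩
    have hyA : y.val < N+2 := by
      by_contra h
      have := hB0 y _ h hy
      simp at this
    obtain ⟨x, hx1, hadj, _⟩ := hP.stronglyDominates ⟨1, by omega⟩ ⟨2, by omega⟩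
      (by simp only [Fin.lt_def, Fin.val_mk]; omega) y hy
    have hxB : ¬ x.val < N+2 := by
      rw [gapGraph_adj] at hadj
      intro h
      exact hadj ⟨fun _ => hyA, fun _ => h⟩
    have := hB0 x _ hxB hx1
    simp at this
  -- Lower bound for transitivity: N+2
  have htrans : N + 2 ≤ transitivity (gapGraph N) := by
    have hbdd : BddAbove {k | ∃ P : Fin k → Set (Fin (2*N+3)),
        IsTransitivePartition (gapGraph N) P} := by
      refine ⟨2*N+3, ?_⟩
      rintro k ⟨P, hP⟩
      exact size_le_card hP
    apply le_csSup hbdd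
    refine ⟨fun i => {v | v.val = i.val ∨ v.val = N+2+i.val}, ?_, ?_, ?_, ?_⟩
    · intro i
      exact ⟨⟨i.val, by omega⟩, Or.inl rfl⟩
    · intro i j hij
      rw [Set.disjoint_left]
      rintro v (hv | hv) hvj <;> rcases hvj with hvj | hvj <;>
        · exact hij (Fin.ext (by omega))
    · intro v
      by_cases h : v.val < N+2
      · exact ⟨⟨v.val, h⟩, Or.inl rfl⟩
      · refine ⟨⟨v.val - (N+2), by omega⟩, Or.inr ?_⟩
        simp only [Set.mem_setOf_eq]
        omega
    · rintro i j hij y (hy | hy)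
      · -- y on the A side; dominate by the B-vertex of part i
        have hij' : i.val < j.val := hij
        refine ⟨⟨N+2+i.val, by omega⟩, Or.inr rfl, ?_⟩
        rw [gapGraph_adj]
        intro h
        have := h.mpr (by omega : y.val < N+2)
        simp at this
      · -- y on the B side; dominate by the A-vertex of part i
        refine ⟨⟨i.val, by omega⟩, Or.inl rfl, ?_⟩
        rw [gapGraph_adj]
        intro h
        have := h.mp (by simp : (⟨i.val, by omega⟩ : Fin (2*N+3)).val < N+2)
        omega
  omega


end StrongTrans
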